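/- arXiv:1808.07249 — 3 statements merged into one kernel-verified Lean document; each statement's English description precedes it below -/
import Mathlib

section
/- Each column s_j of the Moore–Penrose pseudo-inverse D† of the incidence matrix of a connected weighted graph satisfies ‖s_j‖₂ ≤ √(2‖W‖_∞)/ρ(G), where ρ(G) is the second-smallest Laplacian eigenvalue. -/
open Matrix

/-- Oriented incidence matrix of a weighted graph on vertex set `V`:
rows are indexed by ordered pairs `(i,j)` with `i < j` (the chosen orientation),
with entry `√W_{ij}` at the head `i`, `−√W_{ij}` at the tail `j`, and `0` otherwise. -/
noncomputable def inc {V : Type*} [Fintype V] [DecidableEq V] [LinearOrder V]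
    (W : Matrix V V ℝ) : Matrix (V × V) V ℝ :=
  fun e k =>
    if e.1 < e.2 then
      (if k = e.1 then Real.sqrt (W e.1 e.2)
       else if k = e.2 then -Real.sqrt (W e.1 e.2) else 0)
    else 0

/-- Graph Laplacian `L = Λ − W`, where `Λ` is the diagonal matrix of weighted degrees. -/
noncomputable def lap {V : Type*} [Fintype V] [DecidableEq V]
    (W : Matrix V V ℝ) : Matrix V V ℝ :=
  Matrix.diagonal (fun i => ∑ j, W i j) - W


section AuxStmt3
variable {V : Type*} [Fintype V] [DecidableEq V] [LinearOrder V]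

lemma factor (W : Matrix V V ℝ)
    (hsym : ∀ i j, W i j = W j i) (hnonneg : ∀ i j, 0 ≤ W i j)
    (hdiag : ∀ i, W i i = 0) :
    (inc W)ᵀ * inc W = lap W := by
  ext i j
  rw [Matrix.mul_apply, Fintype.sum_prod_type]
  rcases eq_or_ne i j with rfl | hij
  · -- diagonal case
    have key : ∀ a b : V, (inc W)ᵀ i (a, b) * inc W (a, b) i =
        (if a = i ∧ i < b then W i b else 0) + (if b = i ∧ a < i then W a i else 0) := by
      intro a b
      simp only [Matrix.transpose_apply, inc]
      by_cases h1 : a < b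
      · simp only [if_pos h1]
        rcases eq_or_ne i a with rfl | hia
        · rw [if_pos rfl, if_pos ⟨rfl, h1⟩,
            if_neg (fun h : b = i ∧ i < i => lt_irrefl i h.2), add_zero,
            Real.mul_self_sqrt (hnonneg i b)]
        · rcases eq_or_ne i b with rfl | hib
          · rw [if_neg hia, if_pos rfl,
              if_neg (fun h : a = i ∧ i < i => lt_irrefl i h.2),
              if_pos ⟨rfl, h1⟩, zero_add, neg_mul_neg,
              Real.mul_self_sqrt (hnonneg a i)]
          · rw [if_neg hia, if_neg hib, zero_mul,
              if_neg (fun h => hia h.1.symm), if_neg (fun h => hib h.1.symm), add_zero]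
      · rw [if_neg h1, zero_mul,
          if_neg (fun h : a = i ∧ i < b => h1 (h.1 ▸ h.2)),
          if_neg (fun h : b = i ∧ a < i => h1 (h.1 ▸ h.2)), add_zero]
    simp only [key, Finset.sum_add_distrib]
    have A : (∑ a : V, ∑ b : V, if a = i ∧ i < b then W i b else 0)
        = ∑ b : V, if i < b then W i b else 0 := by
      rw [Finset.sum_comm]
      refine Finset.sum_congr rfl fun b _ => ?_
      simp [ite_and, Finset.sum_ite_eq']
    have B : (∑ a : V, ∑ b : V, if b = i ∧ a < i then W a i else 0)
        = ∑ a : V, if a < i then W a i else 0 := by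
      refine Finset.sum_congr rfl fun a _ => ?_
      simp [ite_and, Finset.sum_ite_eq']
    have C : (∑ a : V, if a < i then W a i else 0)
        = ∑ b : V, if b < i then W i b else 0 :=
      Finset.sum_congr rfl fun a _ => by rw [hsym]
    rw [A, B, C, ← Finset.sum_add_distrib]
    have D : (∑ b : V, ((if i < b then W i b else 0) + if b < i then W i b else 0))
        = ∑ b : V, W i b := by
      refine Finset.sum_congr rfl fun b _ => ?_
      rcases lt_trichotomy i b with h | rfl | h
      · simp [h, lt_asymm h]
      · simp [hdiag]
      · simp [h, lt_asymm h]
    rw [D]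
    simp [lap, hdiag i]
  · -- off-diagonal case
    have hmM : min i j < max i j := min_lt_max.mpr hij
    have key : ∀ a b : V, (inc W)ᵀ i (a, b) * inc W (a, b) j =
        if a = min i j ∧ b = max i j then -W i j else 0 := by
      intro a b
      simp only [Matrix.transpose_apply, inc]
      by_cases h1 : a < b
      · simp only [if_pos h1]
        rcases eq_or_ne i a with rfl | hia
        · rcases eq_or_ne j b with rfl | hjb
          · rw [if_pos rfl, if_neg (fun h : j = i => hij h.symm), if_pos rfl,
              if_pos ⟨(min_eq_left h1.le).symm, (max_eq_right h1.le).symm⟩,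
              mul_neg, Real.mul_self_sqrt (hnonneg i j)]
          · rw [if_pos rfl, if_neg (fun h : j = i => hij h.symm), if_neg hjb, mul_zero,
              if_neg]
            rintro ⟨ha, hb⟩
            have hle : i ≤ j := by rw [ha]; exact min_le_right i j
            exact hjb (hb.trans (max_eq_right hle)).symm
        · rcases eq_or_ne i b with rfl | hib
          · rw [if_neg hia, if_pos rfl]
            rcases eq_or_ne j a with rfl | hja
            · rw [if_pos rfl,
                if_pos ⟨(min_eq_right h1.le).symm, (max_eq_left h1.le).symm⟩,
                neg_mul, Real.mul_self_sqrt (hnonneg j i), hsym j i]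
            · rw [if_neg hja, if_neg (fun h : j = i => hij h.symm), mul_zero, if_neg]
              rintro ⟨ha, hb⟩
              have hle : j ≤ i := by
                have := le_max_right i j
                rwa [← hb] at this
              exact hja (ha.trans (min_eq_right hle)).symm
          · rw [if_neg hia, if_neg hib, zero_mul, if_neg]
            rintro ⟨rfl, rfl⟩
            rcases le_total i j with h | h
            · exact hia (min_eq_left h).symm
            · exact hib (max_eq_left h).symm
      · rw [if_neg h1, zero_mul, if_neg]
        rintro ⟨rfl, rfl⟩
        exact h1 hmM
    simp only [key]
    have : (∑ a : V, ∑ b : V, if a = min i j ∧ b = max i j then -W i j else 0) = -W i j := by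
      simp [ite_and, Finset.sum_ite_eq']
    rw [this]
    simp [lap, Matrix.diagonal_apply_ne _ hij]

lemma rowsum (W : Matrix V V ℝ) (e : V × V) : ∑ k, inc W e k = 0 := by
  by_cases h : e.1 < e.2
  · have hne : e.1 ≠ e.2 := ne_of_lt h
    have : ∀ k, inc W e k =
        (if k = e.1 then Real.sqrt (W e.1 e.2) else 0)
        + (if k = e.2 then -Real.sqrt (W e.1 e.2) else 0) := by
      intro k
      simp only [inc, if_pos h]
      split_ifs with h1 h2 <;> simp_all
    simp [this, Finset.sum_add_distrib, Finset.sum_ite_eq']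
  · simp [inc, h]

lemma rowsq (W : Matrix V V ℝ) (hnonneg : ∀ i j, 0 ≤ W i j) (e : V × V) :
    ∑ k, (inc W e k) ^ 2 = if e.1 < e.2 then 2 * W e.1 e.2 else 0 := by
  by_cases h : e.1 < e.2
  · have hne : e.1 ≠ e.2 := ne_of_lt h
    have : ∀ k, (inc W e k) ^ 2 =
        (if k = e.1 then W e.1 e.2 else 0) + (if k = e.2 then W e.1 e.2 else 0) := by
      intro k
      simp only [inc, if_pos h]
      split_ifs with h1 h2 <;>
        simp_all [Real.sq_sqrt (hnonneg e.1 e.2), neg_pow]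
    simp [this, Finset.sum_add_distrib, Finset.sum_ite_eq', h]
    ring
  · simp [inc, h]

private theorem stmt3' [Nonempty V]
    (W : Matrix V V ℝ)
    (hsym : ∀ i j, W i j = W j i)
    (hnonneg : ∀ i j, 0 ≤ W i j)
    (hdiag : ∀ i, W i i = 0)
    (Dp : Matrix V (V × V) ℝ)
    (hp1 : inc W * Dp * inc W = inc W)
    (hp2 : Dp * inc W * Dp = Dp)
    (hp3 : (inc W * Dp)ᵀ = inc W * Dp)
    (hp4 : (Dp * inc W)ᵀ = Dp * inc W)
    (ρ : ℝ) (hρpos : 0 < ρ)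
    (hρ : IsGreatest {r : ℝ | ∀ x : V → ℝ, (∑ i, x i) = 0 →
            r * (∑ i, x i ^ 2) ≤ ∑ i, x i * (lap W).mulVec x i} ρ) :
    ∀ e : V × V,
      Real.sqrt (∑ i, (Dp i e) ^ 2) ≤ Real.sqrt (2 * (⨆ i, ⨆ j, |W i j|)) / ρ := by
  have hL : (inc W)ᵀ * inc W = lap W := factor W hsym hnonneg hdiag
  have hLDp : lap W * Dp = (inc W)ᵀ := by
    rw [← hL, Matrix.mul_assoc, ← hp3, ← Matrix.transpose_mul, hp1]
  have hDpfac : (inc W)ᵀ * (Dpᵀ * Dp) = Dp := by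
    have h := hp2
    rw [← hp4, Matrix.transpose_mul] at h
    rw [← Matrix.mul_assoc, h]
  -- sup bound
  set S := ⨆ i, ⨆ j, |W i j| with hSdef
  have hWS : ∀ a b, |W a b| ≤ S := by
    intro a b
    have h1 : |W a b| ≤ ⨆ j, |W a j| :=
      le_ciSup (f := fun j => |W a j|) (Set.Finite.bddAbove (Set.finite_range _)) b
    exact h1.trans
      (le_ciSup (f := fun i => ⨆ j, |W i j|) (Set.Finite.bddAbove (Set.finite_range _)) a)
  have hS0 : 0 ≤ S := (abs_nonneg _).trans (hWS (Classical.arbitrary V) (Classical.arbitrary V))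
  intro e
  -- column of Dp sums to zero
  have hs0 : (∑ i, Dp i e) = 0 := by
    conv_lhs => rw [← hDpfac]
    simp only [Matrix.mul_apply, Matrix.transpose_apply]
    rw [Finset.sum_comm]
    simp [← Finset.sum_mul, rowsum]
  -- L applied to the column
  have hmv : ∀ i, (lap W).mulVec (fun k => Dp k e) i = inc W e i := by
    intro i
    have h := congrFun (congrFun hLDp i) e
    rw [Matrix.mul_apply] at h
    simpa [Matrix.mulVec, dotProduct] using h
  have main : ρ * (∑ i, (Dp i e) ^ 2) ≤ ∑ i, Dp i e * inc W e i := by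
    have h := hρ.1 (fun k => Dp k e) hs0
    simpa [hmv] using h
  -- Cauchy-Schwarz
  set N2 := ∑ i, (Dp i e) ^ 2 with hN2def
  have hN2 : 0 ≤ N2 := Finset.sum_nonneg fun i _ => sq_nonneg _
  have hcs2 : (∑ i, Dp i e * inc W e i) ^ 2 ≤ N2 * ∑ k, (inc W e k) ^ 2 :=
    Finset.sum_mul_sq_le_sq_mul_sq _ _ _
  have hrow : ∑ k, (inc W e k) ^ 2 ≤ 2 * S := by
    rw [rowsq W hnonneg e]
    split_ifs with h
    · have := (abs_le.mp (hWS e.1 e.2)).2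
      linarith
    · linarith
  have hcs : (∑ i, Dp i e * inc W e i) ≤ Real.sqrt N2 * Real.sqrt (2 * S) := by
    have h1 : (∑ i, Dp i e * inc W e i) ^ 2 ≤ N2 * (2 * S) :=
      hcs2.trans (mul_le_mul_of_nonneg_left hrow hN2)
    have h2 : (∑ i, Dp i e * inc W e i) ≤ Real.sqrt (N2 * (2 * S)) := by
      calc (∑ i, Dp i e * inc W e i) ≤ |∑ i, Dp i e * inc W e i| := le_abs_self _
        _ = Real.sqrt ((∑ i, Dp i e * inc W e i) ^ 2) := (Real.sqrt_sq_eq_abs _).symm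
        _ ≤ Real.sqrt (N2 * (2 * S)) := Real.sqrt_le_sqrt h1
    rwa [Real.sqrt_mul hN2] at h2
  have key : ρ * N2 ≤ Real.sqrt N2 * Real.sqrt (2 * S) := main.trans hcs
  rw [le_div_iff₀ hρpos]
  rcases eq_or_lt_of_le (Real.sqrt_nonneg N2) with h0 | hpos
  · rw [← h0, zero_mul]; exact Real.sqrt_nonneg _
  · have hsq : Real.sqrt N2 * Real.sqrt N2 = N2 := Real.mul_self_sqrt hN2
    nlinarith [key, hpos, hsq]

end AuxStmt3

/-- **Column bound for the pseudo-inverse of the incidence matrix.**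
If `Dp` is the Moore–Penrose pseudo-inverse of the incidence matrix `D` (characterized by
the four Penrose conditions) and `ρ > 0` is the spectral gap of the Laplacian `L = DᵀD`
(characterized variationally as the largest constant `r` with
`r‖x‖² ≤ xᵀLx` for all `x` orthogonal to the constants), then every column `s_e` of `Dp`
satisfies `‖s_e‖₂ ≤ √(2‖W‖_∞)/ρ`, where `‖W‖_∞ = maxᵢⱼ |W_{ij}|`. -/
theorem stmt3 {V : Type*} [Fintype V] [DecidableEq V] [LinearOrder V] [Nonempty V]
    (W : Matrix V V ℝ)
    (hsym : ∀ i j, W i j = W j i)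
    (hnonneg : ∀ i j, 0 ≤ W i j)
    (hdiag : ∀ i, W i i = 0)
    (hconn : (SimpleGraph.fromRel (fun i j => W i j ≠ 0)).Connected)
    (Dp : Matrix V (V × V) ℝ)
    (hp1 : inc W * Dp * inc W = inc W)
    (hp2 : Dp * inc W * Dp = Dp)
    (hp3 : (inc W * Dp)ᵀ = inc W * Dp)
    (hp4 : (Dp * inc W)ᵀ = Dp * inc W)
    (ρ : ℝ) (hρpos : 0 < ρ)
    (hρ : IsGreatest {r : ℝ | ∀ x : V → ℝ, (∑ i, x i) = 0 →
            r * (∑ i, x i ^ 2) ≤ ∑ i, x i * (lap W).mulVec x i} ρ) :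
    ∀ e : V × V,
      Real.sqrt (∑ i, (Dp i e) ^ 2) ≤ Real.sqrt (2 * (⨆ i, ⨆ j, |W i j|)) / ρ :=
  stmt3' W hsym hnonneg hdiag Dp hp1 hp2 hp3 hp4 ρ hρpos hρ
end

section
/- For any two graph signals u, v on a connected oriented weighted graph, Σ_{i∈V} u_i v_i ≤ (1/|V|)(Σ_{i∈V} v_i)(Σ_{j∈V} u_j) + ‖(D†)ᵀ v‖_∞ · ‖u‖_TV. -/
open Matrix

section aux
variable {V : Type*} [Fintype V] [DecidableEq V] [LinearOrder V]

lemma sum_pair (i j : V) (hij : i ≠ j) (a : ℝ) (z : V → ℝ) :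
    ∑ k, (if k = i then a else if k = j then -a else 0) * z k = a * z i - a * z j := by
  have h : ∀ k, (if k = i then a else if k = j then -a else 0) * z k
      = (if k = i then a * z k else 0) + (if k = j then -(a * z k) else 0) := by
    intro k
    by_cases h1 : k = i
    · subst h1; simp [hij]
    · by_cases h2 : k = j <;> simp [h1, h2, Ne.symm hij]
  simp only [h, Finset.sum_add_distrib, Finset.sum_ite_eq', Finset.mem_univ, if_true,
    Finset.sum_neg_distrib]
  ring

lemma inc_mulVec (W : Matrix V V ℝ) (z : V → ℝ) (e : V × V) :
    (inc W).mulVec z e =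
      if e.1 < e.2 then Real.sqrt (W e.1 e.2) * (z e.1 - z e.2) else 0 := by
  unfold inc Matrix.mulVec dotProduct
  by_cases h : e.1 < e.2
  · simp only [h, if_true]
    rw [sum_pair e.1 e.2 (ne_of_lt h)]
    ring
  · simp [h]

end aux

section aux2
set_option linter.unusedSectionVars false
variable {V : Type*} [Fintype V] [DecidableEq V] [LinearOrder V]

lemma ker_const (W : Matrix V V ℝ)
    (hsym : ∀ i j, W i j = W j i) (hnonneg : ∀ i j, 0 ≤ W i j)
    (hconn : (SimpleGraph.fromRel (fun i j => W i j ≠ 0)).Connected)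
    (z : V → ℝ) (hz : (inc W).mulVec z = 0) (i j : V) : z i = z j := by
  have adj : ∀ a b : V, a ≠ b → W a b ≠ 0 → z a = z b := by
    intro a b hab hW
    have hWpos : 0 < W a b := lt_of_le_of_ne (hnonneg a b) (Ne.symm hW)
    rcases hab.lt_or_gt with h | h
    · have := congrFun hz (a, b)
      rw [inc_mulVec] at this
      simp only [h, if_true, Pi.zero_apply] at this
      have hs : Real.sqrt (W a b) ≠ 0 := ne_of_gt (Real.sqrt_pos.mpr hWpos)
      have := mul_eq_zero.mp this
      rcases this with h' | h'
      · exact absurd h' hs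
      · linarith [sub_eq_zero.mp h']
    · have := congrFun hz (b, a)
      rw [inc_mulVec] at this
      simp only [h, if_true, Pi.zero_apply] at this
      have hWpos' : 0 < W b a := by rw [hsym]; exact hWpos
      have hs : Real.sqrt (W b a) ≠ 0 := ne_of_gt (Real.sqrt_pos.mpr hWpos')
      have := mul_eq_zero.mp this
      rcases this with h' | h'
      · exact absurd h' hs
      · linarith [sub_eq_zero.mp h']
  obtain ⟨w⟩ := hconn.preconnected i j
  induction w with
  | nil => rfl
  | cons h p ih =>
    rename_i x y zz
    rw [SimpleGraph.fromRel_adj] at h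
    obtain ⟨hne, hor⟩ := h
    have hW : W x y ≠ 0 := by
      rcases hor with h' | h'
      · exact h'
      · rw [hsym]; exact h'
    exact (adj x y hne hW).trans ih

lemma proj_eq (W : Matrix V V ℝ)
    (hsym : ∀ i j, W i j = W j i) (hnonneg : ∀ i j, 0 ≤ W i j)
    (hconn : (SimpleGraph.fromRel (fun i j => W i j ≠ 0)).Connected)
    (Dp : Matrix V (V × V) ℝ)
    (hp1 : inc W * Dp * inc W = inc W)
    (hp4 : (Dp * inc W)ᵀ = Dp * inc W)
    (w : V → ℝ) (hw : ∑ i, w i = 0) :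
    (Dp * inc W).mulVec w = w := by
  set w' := (Dp * inc W).mulVec w with hw'
  -- D w' = D w
  have hD : (inc W).mulVec w' = (inc W).mulVec w := by
    rw [hw', mulVec_mulVec, ← Matrix.mul_assoc, hp1]
  -- sum of w' is 0
  have hsum : ∑ i, w' i = 0 := by
    have : Dp * inc W = (inc W)ᵀ * Dpᵀ := by
      rw [← Matrix.transpose_mul, hp4]
    rw [hw', this, ← mulVec_mulVec]
    set y := Dpᵀ.mulVec w
    have : ∀ i, ((inc W)ᵀ.mulVec y) i = ∑ e, inc W e i * y e := by
      intro i
      simp [Matrix.mulVec, dotProduct, Matrix.transpose_apply]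
    simp only [this]
    rw [Finset.sum_comm]
    have rowsum : ∀ e : V × V, ∑ i, inc W e i * y e = 0 := by
      intro e
      rw [← Finset.sum_mul]
      have : ∑ i, inc W e i = (inc W).mulVec (fun _ => 1) e := by
        simp [Matrix.mulVec, dotProduct]
      rw [this, inc_mulVec]
      simp
    simp [rowsum]
  -- w' - w is in kernel
  have hker : (inc W).mulVec (w' - w) = 0 := by
    rw [Matrix.mulVec_sub, hD, sub_self]
  have hconst : ∀ i j, (w' - w) i = (w' - w) j :=
    ker_const W hsym hnonneg hconn _ hker
  funext i
  have hzero : ∑ j, (w' - w) j = 0 := by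
    simp [Pi.sub_apply, Finset.sum_sub_distrib, hsum, hw]
  have : ∑ j, (w' - w) j = (Fintype.card V : ℝ) * (w' - w) i := by
    rw [Finset.sum_congr rfl (fun j _ => hconst j i)]
    simp [Finset.card_univ, mul_comm]
    ring
  rw [this] at hzero
  rcases mul_eq_zero.mp hzero with h | h
  · by_cases hV : Nonempty V
    · exact absurd h (by positivity)
    · exact absurd ⟨i⟩ hV
  · have := sub_eq_zero.mp h
    exact this.symm ▸ (by linarith [h] : w' i = w i)

end aux2

/-- **Decomposition bound for the inner product of two graph signals (Lemma 4).**
For any two graph signals `u, v` on a connected oriented weighted graph,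
`Σᵢ uᵢ vᵢ ≤ (1/|V|)(Σᵢ vᵢ)(Σⱼ uⱼ) + ‖(D†)ᵀ v‖_∞ ‖u‖_TV`,
where `Dp = D†` is the Moore–Penrose pseudo-inverse of the incidence matrix. -/
theorem stmt10 {V : Type*} [Fintype V] [DecidableEq V] [LinearOrder V] [Nonempty V]
    (W : Matrix V V ℝ)
    (hsym : ∀ i j, W i j = W j i)
    (hnonneg : ∀ i j, 0 ≤ W i j)
    (hdiag : ∀ i, W i i = 0)
    (hconn : (SimpleGraph.fromRel (fun i j => W i j ≠ 0)).Connected)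
    (Dp : Matrix V (V × V) ℝ)
    (hp1 : inc W * Dp * inc W = inc W)
    (hp2 : Dp * inc W * Dp = Dp)
    (hp3 : (inc W * Dp)ᵀ = inc W * Dp)
    (hp4 : (Dp * inc W)ᵀ = Dp * inc W)
    (u v : V → ℝ) :
    ∑ i, u i * v i ≤
      (1 / (Fintype.card V : ℝ)) * (∑ i, v i) * (∑ j, u j)
        + (⨆ e : V × V, |Dpᵀ.mulVec v e|)
          * ∑ p : V × V, if p.1 < p.2 then Real.sqrt (W p.1 p.2) * |u p.2 - u p.1| else 0 := by
  classical
  set n : ℝ := (Fintype.card V : ℝ) with hn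
  have hnpos : 0 < n := by
    rw [hn]; exact_mod_cast Fintype.card_pos
  set c : ℝ := (∑ j, u j) / n with hc
  set w : V → ℝ := fun i => u i - c with hwdef
  have hwsum : ∑ i, w i = 0 := by
    simp only [hwdef, Finset.sum_sub_distrib, Finset.sum_const, Finset.card_univ, nsmul_eq_mul,
      ← hn]
    rw [hc]
    field_simp
    ring
  have split : ∑ i, u i * v i = (1 / n) * (∑ i, v i) * (∑ j, u j) + ∑ i, v i * w i := by
    have h1 : ∀ i, u i * v i = c * v i + v i * w i := by
      intro i; simp only [hwdef]; ring
    rw [Finset.sum_congr rfl (fun i _ => h1 i), Finset.sum_add_distrib, ← Finset.mul_sum, hc]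
    field_simp
  rw [split]
  apply add_le_add le_rfl
  -- main estimate
  have hproj : (Dp * inc W).mulVec w = w :=
    proj_eq W hsym hnonneg hconn Dp hp1 hp4 w hwsum
  set a : V × V → ℝ := Dpᵀ.mulVec v with ha
  have hDw : (inc W).mulVec w = (inc W).mulVec u := by
    funext e
    rw [inc_mulVec, inc_mulVec]
    by_cases h : e.1 < e.2 <;> simp [h, hwdef] <;> ring
  have key : ∑ i, v i * w i = ∑ e, a e * ((inc W).mulVec u e) := by
    have h1 : ∑ i, v i * w i = v ⬝ᵥ w := rfl
    rw [h1, ← hproj, ← Matrix.mulVec_mulVec, Matrix.dotProduct_mulVec, ← hDw]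
    have h2 : v ᵥ* Dp = a := by
      rw [ha, Matrix.mulVec_transpose]
    rw [h2]
    rfl
  rw [key]
  set S : ℝ := ⨆ e : V × V, |a e| with hS
  have hSle : ∀ e, |a e| ≤ S := fun e =>
    le_ciSup (Set.Finite.bddAbove (Set.finite_range (fun e => |a e|))) e
  have habs : ∀ e : V × V, |(inc W).mulVec u e| =
      (if e.1 < e.2 then Real.sqrt (W e.1 e.2) * |u e.2 - u e.1| else 0) := by
    intro e
    rw [inc_mulVec]
    by_cases h : e.1 < e.2
    · simp only [h, if_true, abs_mul, abs_of_nonneg (Real.sqrt_nonneg _), abs_sub_comm]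
    · simp [h]
  calc ∑ e, a e * ((inc W).mulVec u e)
      ≤ ∑ e, S * |(inc W).mulVec u e| := by
        apply Finset.sum_le_sum
        intro e _
        calc a e * ((inc W).mulVec u e) ≤ |a e * ((inc W).mulVec u e)| := le_abs_self _
        _ = |a e| * |(inc W).mulVec u e| := abs_mul _ _
        _ ≤ S * |(inc W).mulVec u e| := by
            apply mul_le_mul_of_nonneg_right (hSle e) (abs_nonneg _)
    _ = S * ∑ e, |(inc W).mulVec u e| := by rw [Finset.mul_sum]
    _ = S * ∑ p : V × V, (if p.1 < p.2 then Real.sqrt (W p.1 p.2) * |u p.2 - u p.1| else 0) := by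
        rw [Finset.sum_congr rfl (fun e _ => habs e)]
end

section
/- If a training set M resolves a partition F with constants K, L > 0 (in the network-flow sense), then M satisfies the network compatibility condition with the same constants: L‖z‖_{∂F} ≤ K‖z‖_M + ‖z‖_{∂F-complement} for every graph signal z, where ‖z‖_M = √((1/|M|)Σ_{i∈M} z_i²). -/
open Matrix

open scoped Classical

/-- **Resolving training sets satisfy the network compatibility condition (Lemma 1).**
Consider a weighted graph with node partition encoded by a labelling `c : V → ι`
(boundary edges `∂F` are those joining differently-labelled nodes). Suppose the training
set `M` resolves the partition with constants `K, L > 0`: for every sign pattern `b` on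
the edges there is a flow `h` (antisymmetric, supported on edges, with prescribed demands
of size at most `K/|M|` at training nodes and `0` elsewhere) obeying the capacity
constraint `|h(i,j)| ≤ √W_{ij}` on intra-cluster edges and `h(i,j) = b_{ij} L √W_{ij}` on
boundary edges. Then for every graph signal `z`:
`L ‖z‖_{∂F} ≤ K ‖z‖_M + ‖z‖_{∂F-complement}`, with `‖z‖_M = √((1/|M|) Σ_{i∈M} z_i²)`. -/
theorem stmt11 {V : Type*} [Fintype V] [DecidableEq V] [LinearOrder V]
    {ι : Type*} (W : Matrix V V ℝ)
    (hsym : ∀ i j, W i j = W j i)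
    (hnonneg : ∀ i j, 0 ≤ W i j)
    (hdiag : ∀ i, W i i = 0)
    (c : V → ι) (M : Finset V) (hM : M.Nonempty)
    (K L : ℝ) (hK : 0 < K) (hL : 0 < L)
    (hres : ∀ b : V × V → ℝ, (∀ p : V × V, b p = 1 ∨ b p = -1) →
      ∃ h : V → V → ℝ,
        (∀ i j, h i j = - h j i) ∧
        (∀ i j, W i j = 0 → h i j = 0) ∧
        (∀ i j, i < j → c i = c j → |h i j| ≤ Real.sqrt (W i j)) ∧
        (∀ i j, i < j → c i ≠ c j → h i j = b (i, j) * L * Real.sqrt (W i j)) ∧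
        (∀ i ∈ M, |∑ j, h i j| ≤ K / (M.card : ℝ)) ∧
        (∀ i ∉ M, (∑ j, h i j) = 0)) :
    ∀ z : V → ℝ,
      L * (∑ p : V × V, if p.1 < p.2 ∧ c p.1 ≠ c p.2 then
            Real.sqrt (W p.1 p.2) * |z p.2 - z p.1| else 0)
        ≤ K * Real.sqrt ((1 / (M.card : ℝ)) * ∑ i ∈ M, (z i) ^ 2)
          + (∑ p : V × V, if p.1 < p.2 ∧ c p.1 = c p.2 then
              Real.sqrt (W p.1 p.2) * |z p.2 - z p.1| else 0) := by
  intro z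
  set b : V × V → ℝ := fun p => if 0 ≤ z p.1 - z p.2 then 1 else -1 with hbdef
  have hb : ∀ p : V × V, b p = 1 ∨ b p = -1 := by
    intro p; simp only [hbdef]; split <;> simp
  obtain ⟨h, hanti, hzero, hcap, hbdry, hdem, hfree⟩ := hres b hb
  have hdiagh : ∀ i, h i i = 0 := fun i => by have := hanti i i; linarith
  set g : V × V → ℝ := fun p => h p.1 p.2 * (z p.1 - z p.2) with hgdef
  set f : V → ℝ := fun i => ∑ j, h i j with hfdef
  have mpos : (0 : ℝ) < (M.card : ℝ) := by
    exact_mod_cast Finset.card_pos.mpr hM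
  -- (A) summation by parts: ∑ p, g p = 2 * ∑ i, z i * f i
  have hA : ∑ p : V × V, g p = 2 * ∑ i, z i * f i := by
    rw [Fintype.sum_prod_type]
    have key : ∀ i j : V, g (i, j) = h i j * z i - h i j * z j := by
      intro i j; simp only [hgdef]; ring
    simp only [key]
    rw [Finset.sum_congr rfl (fun i _ => Finset.sum_sub_distrib _ _),
        Finset.sum_sub_distrib]
    have h1 : ∑ i, ∑ j, h i j * z i = ∑ i, z i * f i := by
      apply Finset.sum_congr rfl; intro i _
      rw [hfdef, Finset.mul_sum]
      exact Finset.sum_congr rfl fun j _ => mul_comm _ _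
    have h2 : ∑ i : V, ∑ j : V, h i j * z j = - ∑ i, z i * f i := by
      rw [Finset.sum_comm, ← Finset.sum_neg_distrib]
      apply Finset.sum_congr rfl; intro j _
      have : ∑ i, h i j * z j = z j * ∑ i, h i j := by
        rw [Finset.mul_sum]; exact Finset.sum_congr rfl fun i _ => mul_comm _ _
      rw [this, hfdef]
      have : ∑ i, h i j = - ∑ i, h j i := by
        rw [← Finset.sum_neg_distrib]
        exact Finset.sum_congr rfl fun i _ => by rw [hanti i j]
      rw [this]; ring
    rw [h1, h2]; ring
  -- (B) halving: ∑ p, g p = 2 * ∑ over oriented pairs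
  have hgsymm : ∀ p : V × V, g (p.2, p.1) = g p := by
    intro p; simp only [hgdef]; rw [hanti p.2 p.1]; ring
  have hB : ∑ p : V × V, g p
      = 2 * ∑ p : V × V, (if p.1 < p.2 then g p else 0) := by
    have split : ∀ p : V × V, g p =
        (if p.1 < p.2 then g p else 0) + (if p.2 < p.1 then g p else 0) := by
      intro p
      rcases lt_trichotomy p.1 p.2 with hlt | heq | hgt
      · rw [if_pos hlt, if_neg (asymm hlt)]; ring
      · rw [if_neg (by rw [heq]; exact lt_irrefl _),
            if_neg (by rw [heq]; exact lt_irrefl _)]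
        simp only [hgdef, heq]; ring
      · rw [if_neg (asymm hgt), if_pos hgt]; ring
    rw [Finset.sum_congr rfl (fun p _ => split p), Finset.sum_add_distrib]
    have hswap : ∑ p : V × V, (if p.2 < p.1 then g p else 0)
        = ∑ p : V × V, (if p.1 < p.2 then g p else 0) := by
      rw [← Equiv.sum_comp (Equiv.prodComm V V)
        (fun p : V × V => if p.1 < p.2 then g p else 0)]
      apply Finset.sum_congr rfl; intro p _
      simp only [Equiv.prodComm_apply, Prod.fst_swap, Prod.snd_swap]
      rcases lt_or_ge p.2 p.1 with hlt | hge
      · rw [if_pos hlt]; simp only [hlt, if_true]; exact (hgsymm p).symm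
      · rw [if_neg (not_lt.mpr hge)]; simp only [not_lt.mpr hge, if_false]
    rw [hswap]; ring
  have hOZF : ∑ p : V × V, (if p.1 < p.2 then g p else 0) = ∑ i, z i * f i := by
    have := hB.symm.trans hA; linarith
  -- split oriented sum into boundary and intra parts
  have hsplit : ∑ p : V × V, (if p.1 < p.2 then g p else 0)
      = (∑ p : V × V, if p.1 < p.2 ∧ c p.1 ≠ c p.2 then g p else 0)
      + (∑ p : V × V, if p.1 < p.2 ∧ c p.1 = c p.2 then g p else 0) := by
    rw [← Finset.sum_add_distrib]
    apply Finset.sum_congr rfl; intro p _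
    by_cases hlt : p.1 < p.2
    · by_cases hc : c p.1 = c p.2
      · rw [if_pos hlt, if_neg (by tauto), if_pos ⟨hlt, hc⟩]; ring
      · rw [if_pos hlt, if_pos ⟨hlt, hc⟩, if_neg (by tauto)]; ring
    · rw [if_neg hlt, if_neg (by tauto), if_neg (by tauto)]; ring
  -- (C) boundary part equals L * Bsum
  have hC : ∑ p : V × V, (if p.1 < p.2 ∧ c p.1 ≠ c p.2 then g p else 0)
      = L * ∑ p : V × V, (if p.1 < p.2 ∧ c p.1 ≠ c p.2 then
          Real.sqrt (W p.1 p.2) * |z p.2 - z p.1| else 0) := by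
    rw [Finset.mul_sum]
    apply Finset.sum_congr rfl; intro p _
    by_cases hp : p.1 < p.2 ∧ c p.1 ≠ c p.2
    · rw [if_pos hp, if_pos hp]
      have hb' := hbdry p.1 p.2 hp.1 hp.2
      simp only [hgdef]
      rw [hb']
      have habs : b p * (z p.1 - z p.2) = |z p.2 - z p.1| := by
        simp only [hbdef]
        rcases le_or_gt 0 (z p.1 - z p.2) with hx | hx
        · rw [if_pos hx, abs_sub_comm, abs_of_nonneg hx]; ring
        · rw [if_neg (not_le.mpr hx), abs_sub_comm, abs_of_neg hx]; ring
      have : b (p.1, p.2) = b p := by rw [← Prod.mk.eta (p := p)]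
      rw [this]
      calc b p * L * Real.sqrt (W p.1 p.2) * (z p.1 - z p.2)
          = L * (Real.sqrt (W p.1 p.2) * (b p * (z p.1 - z p.2))) := by ring
        _ = L * (Real.sqrt (W p.1 p.2) * |z p.2 - z p.1|) := by rw [habs]
    · rw [if_neg hp, if_neg hp]; ring
  -- (D) intra part is bounded below by -Isum
  have hD : - (∑ p : V × V, if p.1 < p.2 ∧ c p.1 = c p.2 then
          Real.sqrt (W p.1 p.2) * |z p.2 - z p.1| else 0)
      ≤ ∑ p : V × V, (if p.1 < p.2 ∧ c p.1 = c p.2 then g p else 0) := by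
    rw [← Finset.sum_neg_distrib]
    apply Finset.sum_le_sum; intro p _
    by_cases hp : p.1 < p.2 ∧ c p.1 = c p.2
    · rw [if_pos hp, if_pos hp]
      have hcap' := hcap p.1 p.2 hp.1 hp.2
      have : |g p| ≤ Real.sqrt (W p.1 p.2) * |z p.2 - z p.1| := by
        simp only [hgdef]
        rw [abs_mul, abs_sub_comm]
        exact mul_le_mul_of_nonneg_right hcap' (abs_nonneg _)
      linarith [neg_abs_le (g p)]
    · rw [if_neg hp, if_neg hp]; simp
  -- (E) demand bound: ∑ i, z i * f i ≤ K * ‖z‖_M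
  have hE : ∑ i, z i * f i
      ≤ K * Real.sqrt ((1 / (M.card : ℝ)) * ∑ i ∈ M, (z i) ^ 2) := by
    have hstep1 : ∑ i, z i * f i = ∑ i ∈ M, z i * f i := by
      symm
      apply Finset.sum_subset (Finset.subset_univ M)
      intro i _ hiM
      rw [hfdef]; simp only
      rw [hfree i hiM]; ring
    rw [hstep1]
    have hstep2 : ∑ i ∈ M, z i * f i ≤ (K / (M.card : ℝ)) * ∑ i ∈ M, |z i| := by
      rw [Finset.mul_sum]
      apply Finset.sum_le_sum; intro i hi
      calc z i * f i ≤ |z i * f i| := le_abs_self _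
        _ = |z i| * |f i| := abs_mul _ _
        _ ≤ |z i| * (K / (M.card : ℝ)) := by
            exact mul_le_mul_of_nonneg_left (hdem i hi) (abs_nonneg _)
        _ = (K / (M.card : ℝ)) * |z i| := mul_comm _ _
    have hCS : ∑ i ∈ M, |z i|
        ≤ Real.sqrt ((M.card : ℝ) * ∑ i ∈ M, (z i) ^ 2) := by
      rw [← Real.sqrt_sq (Finset.sum_nonneg fun i _ => abs_nonneg (z i))]
      apply Real.sqrt_le_sqrt
      have := Finset.sum_mul_sq_le_sq_mul_sq M (fun i => (1 : ℝ)) (fun i => |z i|)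
      simp only [one_mul, one_pow, sq_abs] at this
      calc (∑ i ∈ M, |z i|) ^ 2 ≤ (∑ _i ∈ M, (1:ℝ)) * ∑ i ∈ M, (z i) ^ 2 := this
        _ = (M.card : ℝ) * ∑ i ∈ M, (z i) ^ 2 := by
            rw [Finset.sum_const, nsmul_eq_mul, mul_one]
    have hsqrt : Real.sqrt ((M.card : ℝ) * ∑ i ∈ M, (z i) ^ 2)
        = (M.card : ℝ) * Real.sqrt ((1 / (M.card : ℝ)) * ∑ i ∈ M, (z i) ^ 2) := by
      rw [show (M.card : ℝ) * ∑ i ∈ M, (z i) ^ 2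
          = (M.card : ℝ) ^ 2 * ((1 / (M.card : ℝ)) * ∑ i ∈ M, (z i) ^ 2) by
        rw [one_div, ← mul_assoc, sq, mul_assoc (M.card : ℝ) (M.card : ℝ), mul_inv_cancel₀ mpos.ne', mul_one]]
      rw [Real.sqrt_mul (sq_nonneg _), Real.sqrt_sq mpos.le]
    calc ∑ i ∈ M, z i * f i
        ≤ (K / (M.card : ℝ)) * ∑ i ∈ M, |z i| := hstep2
      _ ≤ (K / (M.card : ℝ)) * Real.sqrt ((M.card : ℝ) * ∑ i ∈ M, (z i) ^ 2) := by
          exact mul_le_mul_of_nonneg_left hCS (div_nonneg hK.le mpos.le)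
      _ = K * Real.sqrt ((1 / (M.card : ℝ)) * ∑ i ∈ M, (z i) ^ 2) := by
          rw [hsqrt, ← mul_assoc, div_mul_cancel₀ K mpos.ne']
  -- assemble
  linarith [hOZF, hsplit, hC, hD, hE]
end
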